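/- Let n ≥ 2 be an integer, H ≥ 0 and C real, q(v) = C − v^{2−2n} − (1+H²)v² − 2H·v^{2−n} for v > 0, and v₀ = ((√(H²n² + 4(n−1)) + (n−2)H)/(2 + 2H²))^{1/n}. Then q(v₀) = C − c₀, where c₀ = n·(2+2H²)^{(n−2)/n} · (2 + nH² + H√(H²n² + 4(n−1))) / ((n−2)H + √(H²n² + 4(n−1)))^{(2n−2)/n}, and q″(v₀) = −2a, where a = 2n(1+H²) · (4(n−1) + H²n² + H(n−2)√(4(n−1) + H²n²)) / ((H(n−2) + √(4(n−1) + H²n²))²). -/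

import Mathlib

open Real

theorem stmt_4 (n : ℕ) (hn : 2 ≤ n) (H C : ℝ) (hH : 0 ≤ H)
    (q : ℝ → ℝ)
    (hq : q = fun v : ℝ => C - v ^ (2 - 2 * (n : ℤ)) - (1 + H ^ 2) * v ^ 2
      - 2 * H * v ^ (2 - (n : ℤ)))
    (v₀ : ℝ)
    (hv₀ : v₀ = ((Real.sqrt (H ^ 2 * (n : ℝ) ^ 2 + 4 * ((n : ℝ) - 1)) + ((n : ℝ) - 2) * H)
      / (2 + 2 * H ^ 2)) ^ ((1 : ℝ) / (n : ℝ))) :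
    q v₀ = C - (n : ℝ) * (2 + 2 * H ^ 2) ^ (((n : ℝ) - 2) / (n : ℝ))
        * (2 + (n : ℝ) * H ^ 2 + H * Real.sqrt (H ^ 2 * (n : ℝ) ^ 2 + 4 * ((n : ℝ) - 1)))
        / (((n : ℝ) - 2) * H + Real.sqrt (H ^ 2 * (n : ℝ) ^ 2 + 4 * ((n : ℝ) - 1)))
          ^ ((2 * (n : ℝ) - 2) / (n : ℝ)) ∧
    deriv (deriv q) v₀ = -(2 * (2 * (n : ℝ) * (1 + H ^ 2)
      * (4 * ((n : ℝ) - 1) + H ^ 2 * (n : ℝ) ^ 2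
        + H * ((n : ℝ) - 2) * Real.sqrt (4 * ((n : ℝ) - 1) + H ^ 2 * (n : ℝ) ^ 2))
      / ((H * ((n : ℝ) - 2) + Real.sqrt (4 * ((n : ℝ) - 1) + H ^ 2 * (n : ℝ) ^ 2)) ^ 2))) := by
  have hn2 : (2:ℝ) ≤ (n:ℝ) := by exact_mod_cast hn
  set N : ℝ := (n:ℝ) with hN
  have hNpos : 0 < N := by linarith
  have hN0 : N ≠ 0 := ne_of_gt hNpos
  rw [show 4 * (N - 1) + H ^ 2 * N ^ 2 = H ^ 2 * N ^ 2 + 4 * (N - 1) from by ring]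
  set σ : ℝ := H ^ 2 * N ^ 2 + 4 * (N - 1) with hσ
  have hσpos : 0 < σ := by rw [hσ]; nlinarith
  set s : ℝ := Real.sqrt σ with hsdef
  have hs2 : s ^ 2 = σ := Real.sq_sqrt hσpos.le
  have hspos : 0 < s := Real.sqrt_pos.mpr hσpos
  set A : ℝ := 2 + 2 * H ^ 2 with hA
  have hApos : 0 < A := by rw [hA]; positivity
  set B : ℝ := s + (N - 2) * H with hB
  have hBpos : 0 < B := by rw [hB]; nlinarith
  have hune : v₀ = (B / A) ^ ((1:ℝ)/N) := hv₀
  have hnN : ((n:ℤ):ℝ) = N := by rw [hN]; push_cast; ring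
  clear_value N σ s A B
  clear hv₀ hsdef
  have hwpos : 0 < B / A := div_pos hBpos hApos
  have hupos : 0 < v₀ := by rw [hune]; exact Real.rpow_pos_of_pos hwpos _
  have hune0 : v₀ ≠ 0 := ne_of_gt hupos
  have hun : v₀ ^ ((n:ℕ):ℤ) = B / A := by
    rw [hune, ← Real.rpow_intCast ((B/A) ^ ((1:ℝ)/N)) ((n:ℕ):ℤ), ← Real.rpow_mul hwpos.le,
      hnN, show (1:ℝ)/N * N = 1 from by field_simp, Real.rpow_one]
  have hu2v : v₀ ^ 2 = B ^ ((2:ℝ)/N) / A ^ ((2:ℝ)/N) := by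
    rw [hune, ← Real.rpow_natCast ((B/A) ^ ((1:ℝ)/N)) 2, ← Real.rpow_mul hwpos.le,
      show (1:ℝ)/N * ((2:ℕ):ℝ) = 2/N from by push_cast; ring,
      Real.div_rpow hBpos.le hApos.le]
  have e1 : v₀ ^ (2 - 2*(n:ℤ)) = v₀ ^ 2 * (A/B)^2 := by
    rw [show (2:ℤ) - 2*(n:ℤ) = 2 + (-((n:ℕ):ℤ)) + (-((n:ℕ):ℤ)) from by push_cast; ring,
      zpow_add₀ hune0, zpow_add₀ hune0, zpow_neg, hun, inv_div,
      show v₀ ^ (2:ℤ) = v₀ ^ 2 from by norm_cast]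
    ring
  have e2 : v₀ ^ (2 - (n:ℤ)) = v₀ ^ 2 * (A/B) := by
    rw [show (2:ℤ) - (n:ℤ) = 2 + (-((n:ℕ):ℤ)) from by push_cast; ring,
      zpow_add₀ hune0, zpow_neg, hun, inv_div,
      show v₀ ^ (2:ℤ) = v₀ ^ 2 from by norm_cast]
  have e3 : v₀ ^ (-(2*(n:ℤ))) = (A/B)^2 := by
    rw [show -(2*(n:ℤ)) = (-((n:ℕ):ℤ)) + (-((n:ℕ):ℤ)) from by push_cast; ring,
      zpow_add₀ hune0, zpow_neg, hun, inv_div]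
    ring
  have e4 : v₀ ^ (-(n:ℤ)) = A/B := by
    rw [show -(n:ℤ) = -((n:ℕ):ℤ) from by push_cast; ring, zpow_neg, hun, inv_div]
  have hs2' : s ^ 2 = H ^ 2 * N ^ 2 + 4 * (N - 1) := by rw [hs2, hσ]
  have key1 : A^2 + (1+H^2)*B^2 + 2*H*(A*B) = N*A*(2 + N*H^2 + H*s) := by
    rw [hA, hB]; linear_combination (1+H^2) * hs2'
  have hAp : A ^ ((N-2)/N) = A / A ^ ((2:ℝ)/N) := by
    rw [show (N-2)/N = 1 - 2/N from by field_simp, Real.rpow_sub hApos, Real.rpow_one]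
  have hBp : B ^ ((2*N-2)/N) = B^2 / B ^ ((2:ℝ)/N) := by
    rw [show (2*N-2)/N = 2 - 2/N from by field_simp, Real.rpow_sub hBpos,
      show B ^ (2:ℝ) = B ^ 2 from by rw [show (2:ℝ) = ((2:ℕ):ℝ) from by norm_num,
        Real.rpow_natCast]]
  have hPA : 0 < A ^ ((2:ℝ)/N) := Real.rpow_pos_of_pos hApos _
  have hPB : 0 < B ^ ((2:ℝ)/N) := Real.rpow_pos_of_pos hBpos _
  have hX : v₀ ^ (2 - 2*(n:ℤ)) + (1+H^2)*v₀^2 + 2*H*v₀ ^ (2 - (n:ℤ))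
      = N * A ^ ((N-2)/N) * (2 + N*H^2 + H*s) / B ^ ((2*N-2)/N) := by
    rw [e1, e2]
    rw [show v₀^2*(A/B)^2 + (1+H^2)*v₀^2 + 2*H*(v₀^2*(A/B))
        = v₀^2 * ((A^2+(1+H^2)*B^2+2*H*(A*B))/B^2) from by field_simp]
    rw [key1, hu2v, hAp, hBp]
    field_simp
  constructor
  · rw [hq]
    simp only
    rw [show (N-2)*H + s = B from by rw [hB]; ring]
    linarith [hX]
  · set g : ℝ → ℝ := fun x => (2*N-2) * x ^ (1 - 2*(n:ℤ)) - 2*(1+H^2)*x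
        + 2*H*(N-2) * x ^ (1 - (n:ℤ)) with hg
    have hq1 : ∀ x : ℝ, x ≠ 0 → deriv q x = g x := by
      intro x hx
      have h1 := hasDerivAt_zpow (2 - 2*(n:ℤ)) x (Or.inl hx)
      have h2 : HasDerivAt (fun v:ℝ => v^2) (2*x) x := by simpa using hasDerivAt_pow 2 x
      have h3 := hasDerivAt_zpow (2 - (n:ℤ)) x (Or.inl hx)
      have hD : HasDerivAt q ((0 - ((2 - 2*(n:ℤ) : ℤ):ℝ) * x ^ (2 - 2*(n:ℤ) - 1)
          - (1+H^2)*(2*x)) - 2*H*(((2 - (n:ℤ) : ℤ):ℝ) * x ^ (2 - (n:ℤ) - 1))) x := by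
        rw [hq]
        exact (((hasDerivAt_const x C).sub h1).sub (h2.const_mul (1+H^2))).sub
          (h3.const_mul (2*H))
      rw [hD.deriv, hg]
      rw [show (2:ℤ) - 2*(n:ℤ) - 1 = 1 - 2*(n:ℤ) from by ring,
        show (2:ℤ) - (n:ℤ) - 1 = 1 - (n:ℤ) from by ring]
      push_cast [hnN]
      ring
    have hev : deriv q =ᶠ[nhds v₀] g := by
      filter_upwards [eventually_ne_nhds hune0] with x hx using hq1 x hx
    rw [hev.deriv_eq]
    have h1 := hasDerivAt_zpow (1 - 2*(n:ℤ)) v₀ (Or.inl hune0)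
    have h3 := hasDerivAt_zpow (1 - (n:ℤ)) v₀ (Or.inl hune0)
    have hD2 : HasDerivAt g ((2*N-2) * (((1 - 2*(n:ℤ) : ℤ):ℝ) * v₀ ^ (1 - 2*(n:ℤ) - 1))
        - 2*(1+H^2)*1 + 2*H*(N-2) * (((1 - (n:ℤ) : ℤ):ℝ) * v₀ ^ (1 - (n:ℤ) - 1))) v₀ := by
      rw [hg]
      exact ((h1.const_mul (2*N-2)).sub ((hasDerivAt_id v₀).const_mul (2*(1+H^2)))).add
        (h3.const_mul (2*H*(N-2)))
    rw [hD2.deriv]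
    rw [show (1:ℤ) - 2*(n:ℤ) - 1 = -(2*(n:ℤ)) from by ring,
      show (1:ℤ) - (n:ℤ) - 1 = -(n:ℤ) from by ring, e3, e4]
    rw [show H*(N-2) + s = B from by rw [hB]; ring]
    have key2 : (2*N-2) * ((1-2*N) * (A/B)^2) - 2*(1+H^2)*1 + 2*H*(N-2) * ((1-N)*(A/B))
        = -(2*(2*N*(1+H^2)*(σ + H*(N-2)*s)/B^2)) := by
      have hBne : B ≠ 0 := hBpos.ne'
      field_simp
      rw [hA, hB, hσ]
      linear_combination (-(1+H^2)) * hs2'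
    push_cast [hnN]
    linear_combination key2
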